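/- Fix an integer g ≥ 2 and an integer d. Then gcd(d−g+1, 2g−2) = 1 if and only if every stable weighted graph of genus g is d-general. -/

import Mathlib

open Finset

noncomputable section
open scoped Classical

variable {V : Type} [Fintype V] [DecidableEq V]

/-- The simple graph underlying a multigraph with multiplicity function `k`:
`u` and `v` are adjacent iff `u ≠ v` and some edge joins them. -/
def graphOf (k : V → V → ℕ) : SimpleGraph V where
  Adj u v := u ≠ v ∧ (0 < k u v ∨ 0 < k v u)
  symm := ⟨fun u v h => ⟨h.1.symm, h.2.symm⟩⟩
  loopless := ⟨fun v h => h.1 rfl⟩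

/-- The number of edges of a multigraph: loops plus half the ordered count. -/
def numEdges (k : V → V → ℕ) : ℕ :=
  (∑ v, k v v) + (∑ u, ∑ v ∈ Finset.univ.erase u, k u v) / 2

/-- The genus of a weighted graph: `∑ w(v) + b₁`, with `b₁ = #E - #V + 1`. -/
def genus (k : V → V → ℕ) (w : V → ℕ) : ℤ :=
  (∑ v, (w v : ℤ)) + ((numEdges k : ℤ) - (Fintype.card V : ℤ) + 1)

/-- Stability: connected, and each weight-zero vertex has valency at least 3. -/
def IsStable (k : V → V → ℕ) (w : V → ℕ) : Prop :=
  (graphOf k).Connected ∧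
    ∀ v, w v = 0 → 3 ≤ 2 * k v v + ∑ u ∈ Finset.univ.erase v, k u v

/-- `δ_A`: the number of edges joining `A` to its complement. -/
def deltaA (k : V → V → ℕ) (A : Finset V) : ℤ :=
  ∑ u ∈ A, ∑ v ∈ Aᶜ, (k u v : ℤ)

/-- `w_A = Σ_{v∈A} (2w(v) − 2 + 2k(v,v) + Σ_{u≠v} k(u,v))`. -/
def wA (k : V → V → ℕ) (w : V → ℕ) (A : Finset V) : ℤ :=
  ∑ v ∈ A, (2 * (w v : ℤ) - 2 + 2 * (k v v : ℤ) + ∑ u ∈ Finset.univ.erase v, (k u v : ℤ))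

/-- `d_A`: the total degree of a multidegree on the subset `A`. -/
def degA (d : V → ℤ) (A : Finset V) : ℤ := ∑ v ∈ A, d v

/-- `m_A(d) = d·w_A/(2g−2) − δ_A/2 ∈ ℚ`. -/
def mA (k : V → V → ℕ) (w : V → ℕ) (D : ℤ) (A : Finset V) : ℚ :=
  (D : ℚ) * (wA k w A : ℚ) / ((2 * genus k w - 2 : ℤ) : ℚ) - (deltaA k A : ℚ) / 2

/-- A balanced multidegree of total degree `D`. -/
def IsBalanced (k : V → V → ℕ) (w : V → ℕ) (D : ℤ) (d : V → ℤ) : Prop :=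
  degA d Finset.univ = D ∧ ∀ A : Finset V, mA k w D A ≤ (degA d A : ℚ)

/-- A strictly balanced multidegree of total degree `D`. -/
def IsStrictlyBalanced (k : V → V → ℕ) (w : V → ℕ) (D : ℤ) (d : V → ℤ) : Prop :=
  IsBalanced k w D d ∧
    ∀ A : Finset V, A ≠ ∅ → A ≠ Finset.univ → mA k w D A < (degA d A : ℚ)

/-- `(Γ,w)` is `d`-general if every balanced multidegree of total degree `d`
is strictly balanced. -/
def IsDGeneral (k : V → V → ℕ) (w : V → ℕ) (D : ℤ) : Prop :=
  ∀ d : V → ℤ, IsBalanced k w D d → IsStrictlyBalanced k w D d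

/-- The generator `c_v` of the lattice `Λ`. -/
def cvec (k : V → V → ℕ) (v : V) : V → ℤ := fun u =>
  if u = v then -(∑ x ∈ Finset.univ.erase v, (k x v : ℤ)) else (k u v : ℤ)

/-- The lattice `Λ ⊆ ℤ^V` generated by the `c_v`. -/
def Lambda (k : V → V → ℕ) : AddSubgroup (V → ℤ) :=
  AddSubgroup.closure (Set.range (cvec k))

/-- The total-degree homomorphism `ℤ^V → ℤ`. -/
def sumHom (V : Type) [Fintype V] : (V → ℤ) →+ ℤ :=
  { toFun := fun d => ∑ v, d v
    map_zero' := by simp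
    map_add' := fun a b => by simp [Finset.sum_add_distrib] }

/-- `Z = {d ∈ ℤ^V : Σ_v d(v) = 0}`. -/
def Zsub (V : Type) [Fintype V] : AddSubgroup (V → ℤ) := (sumHom V).ker

/-- Remove the edge(s) joining `a` and `b` from the multigraph. -/
def removeEdge (k : V → V → ℕ) (a b : V) : V → V → ℕ := fun u v =>
  if (u = a ∧ v = b) ∨ (u = b ∧ v = a) then 0 else k u v

/-- `a`–`b` is a bridge: a single non-loop edge whose removal disconnects the graph. -/
def IsBridge (k : V → V → ℕ) (a b : V) : Prop :=
  a ≠ b ∧ k a b = 1 ∧ ¬ (graphOf (removeEdge k a b)).Connected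

/-- `A` induces a connected sub-multigraph. -/
def IsConnectedSubset (k : V → V → ℕ) (A : Finset V) : Prop :=
  ((graphOf k).induce (A : Set V)).Connected

/-- The equivalence relation `≈` on `V` generated by bridges. -/
def contractSetoid (k : V → V → ℕ) : Setoid V :=
  ⟨Relation.EqvGen (fun u v => IsBridge k u v), Relation.EqvGen.is_equivalence _⟩

/-- The vertex set `V² = V/≈` of the contracted graph `Γ²`. -/
def V2 (k : V → V → ℕ) : Type := Quotient (contractSetoid k)

instance (k : V → V → ℕ) : Finite (V2 k) := Quotient.finite _

instance (k : V → V → ℕ) : Fintype (V2 k) := Fintype.ofFinite _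

/-- The fiber of the quotient map `φ : V → V²` over a class `c`. -/
def fiber (k : V → V → ℕ) (c : V2 k) : Finset V :=
  Finset.univ.filter (fun v => Quotient.mk (contractSetoid k) v = c)

/-- The multiplicity function `k²` of the contracted graph `Γ²`. -/
def k2 (k : V → V → ℕ) : V2 k → V2 k → ℕ := fun c c' =>
  if c = c' then
    (∑ v ∈ fiber k c, k v v) +
      (∑ u ∈ fiber k c, ∑ v ∈ (fiber k c).erase u,
        if IsBridge k u v then 0 else k u v) / 2
  else ∑ u ∈ fiber k c, ∑ v ∈ fiber k c', k u v

/-- The weight function `w²` of the contracted weighted graph `(Γ²,w²)`. -/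
def w2 (k : V → V → ℕ) (w : V → ℕ) : V2 k → ℕ := fun c => ∑ v ∈ fiber k c, w v

/-- The pushforward `α(d)` of a multidegree to the contracted graph. -/
def alphaMap (k : V → V → ℕ) (d : V → ℤ) : V2 k → ℤ := fun c => ∑ v ∈ fiber k c, d v

/-- The setoid on multidegrees of total degree `D`: two are equivalent if their
difference lies in `Λ`; the quotient is `Δ^d`. -/
def degSetoid (k : V → V → ℕ) (D : ℤ) : Setoid {d : V → ℤ // (∑ v, d v) = D} :=
  ⟨fun a b => (a : V → ℤ) - (b : V → ℤ) ∈ Lambda k, by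
    constructor
    · intro a; simpa using (Lambda k).zero_mem
    · intro a b h; have h2 := (Lambda k).neg_mem h; rwa [neg_sub] at h2
    · intro a b c h1 h2
      have h3 := (Lambda k).add_mem h1 h2
      rwa [sub_add_sub_cancel] at h3⟩

/-- Number of edges of the sub-multigraph induced on `A`. -/
def numEdgesIn (k : V → V → ℕ) (A : Finset V) : ℕ :=
  (∑ v ∈ A, k v v) + (∑ u ∈ A, ∑ v ∈ A.erase u, k u v) / 2

/-- Blow-up of a multigraph at the single bridge `a`–`b`: one exceptional
vertex is inserted in the middle of the bridge. -/
def blowK (k : V → V → ℕ) (a b : V) : (V ⊕ Unit) → (V ⊕ Unit) → ℕ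
  | Sum.inl u, Sum.inl v => if (u = a ∧ v = b) ∨ (u = b ∧ v = a) then 0 else k u v
  | Sum.inl u, Sum.inr _ => if u = a ∨ u = b then 1 else 0
  | Sum.inr _, Sum.inl v => if v = a ∨ v = b then 1 else 0
  | Sum.inr _, Sum.inr _ => 0

/-- Weight function of the blow-up at one bridge: exceptional vertex has weight 0. -/
def blowW (w : V → ℕ) : V ⊕ Unit → ℕ
  | Sum.inl v => w v
  | Sum.inr _ => 0

/-- Blow-up of a multigraph at a set `S` of bridges (given as ordered pairs):
one exceptional vertex is inserted in the middle of each bridge of `S`. -/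
def blowKS (k : V → V → ℕ) (S : Finset (V × V)) :
    (V ⊕ {p : V × V // p ∈ S}) → (V ⊕ {p : V × V // p ∈ S}) → ℕ
  | Sum.inl u, Sum.inl v => if (u, v) ∈ S ∨ (v, u) ∈ S then 0 else k u v
  | Sum.inl u, Sum.inr e => if u = e.1.1 ∨ u = e.1.2 then 1 else 0
  | Sum.inr e, Sum.inl v => if v = e.1.1 ∨ v = e.1.2 then 1 else 0
  | Sum.inr _, Sum.inr _ => 0

/-- Weight function of the blow-up at a set of bridges. -/
def blowWS (w : V → ℕ) (S : Finset (V × V)) : (V ⊕ {p : V × V // p ∈ S}) → ℕ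
  | Sum.inl v => w v
  | Sum.inr _ => 0

/-- Strictly balanced multidegree of total degree `D` on the blow-up `Γ̂_S`:
balanced (with degree 1 on each exceptional vertex), and the inequality is
strict for every proper nonempty `A` such that some edge between `A` and its
complement has no exceptional endpoint. -/
def IsStrictlyBalancedBlowS (k : V → V → ℕ) (w : V → ℕ) (S : Finset (V × V)) (D : ℤ)
    (dh : (V ⊕ {p : V × V // p ∈ S}) → ℤ) : Prop :=
  IsBalanced (blowKS k S) (blowWS w S) D dh ∧
    (∀ e : {p : V × V // p ∈ S}, dh (Sum.inr e) = 1) ∧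
    ∀ A : Finset (V ⊕ {p : V × V // p ∈ S}), A ≠ ∅ → A ≠ Finset.univ →
      (∃ u v : V, Sum.inl u ∈ A ∧ Sum.inl v ∉ A ∧ 0 < blowKS k S (Sum.inl u) (Sum.inl v)) →
      mA (blowKS k S) (blowWS w S) D A < (degA dh A : ℚ)

/-- Multiplicity function of the vine graph: two vertices joined by `δ` edges,
no loops. -/
def vineK (δ : ℕ) : Fin 2 → Fin 2 → ℕ := fun u v => if u = v then 0 else δ

/-- Weight function of the vine graph with weights `g₁, g₂`. -/
def vineW (g1 g2 : ℕ) : Fin 2 → ℕ := fun v => if v = 0 then g1 else g2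

/-- The data of a stable vine graph of genus `g` with weights `g₁, g₂` and `δ` edges. -/
def StableVine (g : ℤ) (g1 g2 δ : ℕ) : Prop :=
  2 ≤ δ ∧ ((g1 = 0 ∨ g2 = 0) → 3 ≤ δ) ∧ (g1 : ℤ) + (g2 : ℤ) + (δ : ℤ) - 1 = g

/-! ### Auxiliary lemmas -/

lemma even_pairsum (k : V → V → ℕ) (hk : ∀ u v, k u v = k v u) (s : Finset V) :
    Even (∑ u ∈ s, ∑ v ∈ s.erase u, k u v) := by
  induction s using Finset.induction_on with
  | empty => simp
  | @insert a s ha ih =>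
    obtain ⟨t, ht⟩ := ih
    have h1 : ∀ u ∈ s, ∑ v ∈ (insert a s).erase u, k u v
        = k u a + ∑ v ∈ s.erase u, k u v := by
      intro u hu
      have hua : a ≠ u := by rintro rfl; exact ha hu
      rw [Finset.erase_insert_of_ne hua,
        Finset.sum_insert (fun h => ha (Finset.mem_of_mem_erase h))]
    rw [Finset.sum_insert ha, Finset.erase_insert ha, Finset.sum_congr rfl h1,
      Finset.sum_add_distrib]
    have h2 : ∑ v ∈ s, k a v = ∑ u ∈ s, k u a :=
      Finset.sum_congr rfl fun v _ => hk a v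
    exact ⟨(∑ u ∈ s, k u a) + t, by omega⟩

lemma sum_split_compl (f : V → ℤ) (A : Finset V) {v : V} (hv : v ∈ A) :
    ∑ u ∈ Finset.univ.erase v, f u = (∑ u ∈ A.erase v, f u) + ∑ u ∈ Aᶜ, f u := by
  have hdisj : Disjoint (A.erase v) Aᶜ := Finset.disjoint_left.mpr
    (fun u hu hc => (Finset.mem_compl.mp hc) (Finset.mem_of_mem_erase hu))
  have hset : Finset.univ.erase v = (A.erase v) ∪ Aᶜ := by
    ext u
    simp only [Finset.mem_erase, Finset.mem_union, Finset.mem_compl, Finset.mem_univ, and_true]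
    constructor
    · intro h
      by_cases hu : u ∈ A
      · exact Or.inl ⟨h, hu⟩
      · exact Or.inr hu
    · rintro (⟨h, _⟩ | h)
      · exact h
      · rintro rfl; exact h hv
  rw [hset, Finset.sum_union hdisj]

lemma double_sum_cast (k : V → V → ℕ) (hk : ∀ u v, k u v = k v u) (A : Finset V) :
    ∑ v ∈ A, ∑ u ∈ A.erase v, (k u v : ℤ)
      = ((∑ u ∈ A, ∑ v ∈ A.erase u, k u v : ℕ) : ℤ) := by
  push_cast
  exact Finset.sum_congr rfl fun v _ => Finset.sum_congr rfl fun u _ => by rw [hk]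

lemma wA_sub_delta (k : V → V → ℕ) (w : V → ℕ) (hk : ∀ u v, k u v = k v u) (A : Finset V) :
    ∃ M : ℤ, wA k w A = 2 * M + deltaA k A := by
  obtain ⟨t, ht⟩ := even_pairsum k hk A
  refine ⟨(∑ v ∈ A, ((w v : ℤ) - 1 + (k v v : ℤ))) + t, ?_⟩
  have hsplit : ∀ v ∈ A,
      (2 * (w v : ℤ) - 2 + 2 * (k v v : ℤ) + ∑ u ∈ Finset.univ.erase v, (k u v : ℤ))
      = (2 * (w v : ℤ) - 2 + 2 * (k v v : ℤ))
        + ((∑ u ∈ A.erase v, (k u v : ℤ)) + ∑ u ∈ Aᶜ, (k u v : ℤ)) := by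
    intro v hv
    rw [sum_split_compl _ _ hv]
  have hdelta : ∑ v ∈ A, ∑ u ∈ Aᶜ, (k u v : ℤ) = deltaA k A := by
    unfold deltaA
    exact Finset.sum_congr rfl fun v _ => Finset.sum_congr rfl fun u _ => by rw [hk]
  have hT : ∑ v ∈ A, ∑ u ∈ A.erase v, (k u v : ℤ) = (t : ℤ) + t := by
    rw [double_sum_cast k hk A, ht]; push_cast; ring
  have hconst : ∑ v ∈ A, (2 * (w v : ℤ) - 2 + 2 * (k v v : ℤ))
      = 2 * ∑ v ∈ A, ((w v : ℤ) - 1 + (k v v : ℤ)) := by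
    rw [Finset.mul_sum]
    exact Finset.sum_congr rfl fun v _ => by ring
  unfold wA
  calc ∑ v ∈ A, (2 * (w v : ℤ) - 2 + 2 * (k v v : ℤ) + ∑ u ∈ Finset.univ.erase v, (k u v : ℤ))
      = ∑ v ∈ A, ((2 * (w v : ℤ) - 2 + 2 * (k v v : ℤ))
        + ((∑ u ∈ A.erase v, (k u v : ℤ)) + ∑ u ∈ Aᶜ, (k u v : ℤ))) :=
        Finset.sum_congr rfl hsplit
    _ = (∑ v ∈ A, (2 * (w v : ℤ) - 2 + 2 * (k v v : ℤ)))
        + ((∑ v ∈ A, ∑ u ∈ A.erase v, (k u v : ℤ)) + ∑ v ∈ A, ∑ u ∈ Aᶜ, (k u v : ℤ)) := by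
        rw [← Finset.sum_add_distrib, ← Finset.sum_add_distrib]
    _ = 2 * ((∑ v ∈ A, ((w v : ℤ) - 1 + (k v v : ℤ))) + t) + deltaA k A := by
        rw [hdelta, hT, hconst]; ring

lemma wA_univ_eq (k : V → V → ℕ) (w : V → ℕ) (hk : ∀ u v, k u v = k v u) :
    wA k w Finset.univ = 2 * genus k w - 2 := by
  obtain ⟨t, ht⟩ := even_pairsum k hk Finset.univ
  have hdiv : (∑ u, ∑ v ∈ Finset.univ.erase u, k u v) / 2 = t := by omega
  have hT : ∑ v, ∑ u ∈ Finset.univ.erase v, (k u v : ℤ) = (t : ℤ) + t := by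
    rw [double_sum_cast k hk Finset.univ, ht]; push_cast; ring
  have h1 : ∑ v : V, (2 * (w v : ℤ) - 2 + 2 * (k v v : ℤ))
      = 2 * (∑ v, (w v : ℤ)) - 2 * (Fintype.card V : ℤ) + 2 * ∑ v, (k v v : ℤ) := by
    rw [Finset.sum_add_distrib, Finset.sum_sub_distrib, ← Finset.mul_sum, ← Finset.mul_sum,
      Finset.sum_const, Finset.card_univ]
    push_cast; ring
  unfold wA genus numEdges
  rw [hdiv, Finset.sum_add_distrib, hT, h1]
  push_cast
  ring

lemma exists_neighbor (k : V → V → ℕ) (hk : ∀ u v, k u v = k v u)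
    (hconn : (graphOf k).Connected) (hcard : 2 ≤ Fintype.card V) (v : V) :
    ∃ u, u ≠ v ∧ 0 < k u v := by
  obtain ⟨u, hu⟩ := Fintype.exists_ne_of_one_lt_card (by omega) v
  obtain ⟨p⟩ := hconn.preconnected v u
  have hnil : ¬ p.Nil := SimpleGraph.Walk.not_nil_of_ne (fun h => hu h.symm)
  have hadj := p.adj_snd hnil
  have hvb := hk v p.snd
  refine ⟨p.snd, fun h => hadj.1 h.symm, ?_⟩
  rcases hadj.2 with h' | h' <;> omega

lemma one_le_term (k : V → V → ℕ) (w : V → ℕ) (hk : ∀ u v, k u v = k v u)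
    (hconn : (graphOf k).Connected)
    (hst2 : ∀ v, w v = 0 → 3 ≤ 2 * k v v + ∑ u ∈ Finset.univ.erase v, k u v)
    (hcard : 2 ≤ Fintype.card V) (v : V) :
    1 ≤ 2 * (w v : ℤ) - 2 + 2 * (k v v : ℤ) + ∑ u ∈ Finset.univ.erase v, (k u v : ℤ) := by
  obtain ⟨u, huv, hpos⟩ := exists_neighbor k hk hconn hcard v
  have hS : 1 ≤ ∑ u ∈ Finset.univ.erase v, k u v :=
    hpos.trans_le (Finset.single_le_sum (f := fun u => k u v) (fun i _ => Nat.zero_le _)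
      (Finset.mem_erase.mpr ⟨huv, Finset.mem_univ u⟩))
  have hcast : (∑ u ∈ Finset.univ.erase v, (k u v : ℤ))
      = ((∑ u ∈ Finset.univ.erase v, k u v : ℕ) : ℤ) := by push_cast; rfl
  rw [hcast]
  rcases Nat.eq_zero_or_pos (w v) with h0 | h1
  · have h3 := hst2 v h0
    omega
  · omega

lemma wA_pos (k : V → V → ℕ) (w : V → ℕ) (hk : ∀ u v, k u v = k v u)
    (hconn : (graphOf k).Connected)
    (hst2 : ∀ v, w v = 0 → 3 ≤ 2 * k v v + ∑ u ∈ Finset.univ.erase v, k u v)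
    (hcard : 2 ≤ Fintype.card V) (A : Finset V) (hA : A.Nonempty) :
    1 ≤ wA k w A := by
  have h2 : (A.card : ℤ) * 1 ≤ ∑ v ∈ A,
      (2 * (w v : ℤ) - 2 + 2 * (k v v : ℤ) + ∑ u ∈ Finset.univ.erase v, (k u v : ℤ)) := by
    rw [← nsmul_eq_mul, ← Finset.sum_const]
    exact Finset.sum_le_sum fun v _ => one_le_term k w hk hconn hst2 hcard v
  have h3 : (1 : ℤ) ≤ A.card := by exact_mod_cast hA.card_pos
  unfold wA
  linarith

/-- The forward direction: coprimality implies `d`-generality of every stable graph. -/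
lemma forward_general (g d : ℤ) (hg : 2 ≤ g)
    (hgcd : Int.gcd (d - g + 1) (2 * g - 2) = 1)
    (k : V → V → ℕ) (w : V → ℕ) (hk : ∀ u v, k u v = k v u)
    (hst : IsStable k w) (hgen : genus k w = g) : IsDGeneral k w d := by
  intro dd hbal
  refine ⟨hbal, fun A hAne hAuniv => ?_⟩
  rcases lt_or_eq_of_le (hbal.2 A) with h | h
  · exact h
  exfalso
  have hAnonempty : A.Nonempty := Finset.nonempty_iff_ne_empty.mpr hAne
  have hAcne : Aᶜ.Nonempty := by
    rcases Finset.eq_empty_or_nonempty Aᶜ with h' | h'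
    · exact absurd (by simpa [Finset.compl_eq_empty_iff] using h') hAuniv
    · exact h'
  have hcard : 2 ≤ Fintype.card V := by
    obtain ⟨a, ha⟩ := hAnonempty
    obtain ⟨b, hb⟩ := hAcne
    have hab : a ≠ b := fun hx => (Finset.mem_compl.mp hb) (hx ▸ ha)
    exact Fintype.one_lt_card_iff.mpr ⟨a, b, hab⟩
  have hnpos : (0 : ℤ) < 2 * g - 2 := by omega
  have hnq : ((2 * g - 2 : ℤ) : ℚ) ≠ 0 := by exact_mod_cast hnpos.ne'
  have hwApos : 1 ≤ wA k w A := wA_pos k w hk hst.1 hst.2 hcard A hAnonempty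
  have hwAcpos : 1 ≤ wA k w Aᶜ := wA_pos k w hk hst.1 hst.2 hcard Aᶜ hAcne
  have hsum : wA k w A + wA k w Aᶜ = 2 * g - 2 := by
    have := Finset.sum_add_sum_compl A
      (fun v => 2 * (w v : ℤ) - 2 + 2 * (k v v : ℤ) + ∑ u ∈ Finset.univ.erase v, (k u v : ℤ))
    unfold wA
    rw [this]
    have h2 := wA_univ_eq k w hk
    unfold wA at h2
    rw [h2, hgen]
  have h' := h
  unfold mA at h'
  rw [hgen] at h'
  rw [sub_eq_iff_eq_add, div_eq_iff hnq] at h'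
  have h4 : ((2 * d * wA k w A : ℤ) : ℚ)
      = ((2 * degA dd A * (2 * g - 2) + deltaA k A * (2 * g - 2) : ℤ) : ℚ) := by
    push_cast
    push_cast at h'
    linear_combination 2 * h'
  have h5 : 2 * d * wA k w A = 2 * degA dd A * (2 * g - 2) + deltaA k A * (2 * g - 2) := by
    exact_mod_cast h4
  obtain ⟨M, hM⟩ := wA_sub_delta k w hk A
  have h6 : 2 * ((d - g + 1) * wA k w A) = 2 * ((2 * g - 2) * (degA dd A - M)) := by
    linear_combination h5 - (2 * g - 2) * hM
  have h7 : (d - g + 1) * wA k w A = (2 * g - 2) * (degA dd A - M) :=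
    mul_left_cancel₀ two_ne_zero h6
  have hdvd : (2 * g - 2) ∣ (d - g + 1) * wA k w A := ⟨degA dd A - M, h7⟩
  have hco : IsCoprime (2 * g - 2 : ℤ) (d - g + 1) := by
    rw [Int.isCoprime_iff_gcd_eq_one, Int.gcd_comm]
    exact hgcd
  have hdvd2 : (2 * g - 2 : ℤ) ∣ wA k w A := hco.dvd_of_dvd_mul_left hdvd
  have := Int.le_of_dvd (by linarith) hdvd2
  linarith

/-! ### The vine counterexample -/

lemma vineK_symm (δ : ℕ) : ∀ u v, vineK δ u v = vineK δ v u := by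
  intro u v
  rcases eq_or_ne u v with h | h
  · rw [h]
  · simp [vineK, h, h.symm]

lemma erase0 : (Finset.univ.erase (0 : Fin 2)) = {1} := by decide
lemma erase1 : (Finset.univ.erase (1 : Fin 2)) = {0} := by decide
lemma compl0 : ({0} : Finset (Fin 2))ᶜ = {1} := by decide
lemma compl1 : ({1} : Finset (Fin 2))ᶜ = {0} := by decide

lemma vineK_conn (δ : ℕ) (hδ : 0 < δ) : (graphOf (vineK δ)).Connected := by
  rw [SimpleGraph.connected_iff]
  refine ⟨fun u v => ?_, ⟨0⟩⟩
  rcases eq_or_ne u v with h | h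
  · rw [h]
  · exact SimpleGraph.Adj.reachable (show u ≠ v ∧ (0 < vineK δ u v ∨ 0 < vineK δ v u) from ⟨h, Or.inl (by simpa [vineK, h] using hδ)⟩)

lemma vine_stable (g1 g2 δ : ℕ) (hδ2 : 2 ≤ δ) (hst3 : (g1 = 0 ∨ g2 = 0) → 3 ≤ δ) :
    IsStable (vineK δ) (vineW g1 g2) := by
  refine ⟨vineK_conn δ (by omega), fun v hv => ?_⟩
  have h01 : ∀ x : Fin 2, x = 0 ∨ x = 1 := by decide
  rcases h01 v with rfl | rfl
  · rw [erase0, Finset.sum_singleton]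
    have : g1 = 0 := by simpa [vineW] using hv
    have := hst3 (Or.inl this)
    simp [vineK]
    omega
  · rw [erase1, Finset.sum_singleton]
    have : g2 = 0 := by simpa [vineW] using hv
    have := hst3 (Or.inr this)
    simp [vineK]
    omega

lemma vine_genus (g1 g2 δ : ℕ) :
    genus (vineK δ) (vineW g1 g2) = (g1 : ℤ) + g2 + δ - 1 := by
  unfold genus numEdges
  rw [Fin.sum_univ_two, Fin.sum_univ_two, Fin.sum_univ_two, erase0, erase1,
    Finset.sum_singleton, Finset.sum_singleton]
  simp only [vineK, vineW]
  norm_num [Fintype.card_fin]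
  omega

lemma vine_wA0 (g1 g2 δ : ℕ) :
    wA (vineK δ) (vineW g1 g2) {0} = 2 * (g1 : ℤ) - 2 + δ := by
  unfold wA
  rw [Finset.sum_singleton, erase0, Finset.sum_singleton]
  simp [vineK, vineW]

lemma vine_wA1 (g1 g2 δ : ℕ) :
    wA (vineK δ) (vineW g1 g2) {1} = 2 * (g2 : ℤ) - 2 + δ := by
  unfold wA
  rw [Finset.sum_singleton, erase1, Finset.sum_singleton]
  simp [vineK, vineW]

lemma vine_delta0 (δ : ℕ) : deltaA (vineK δ) {0} = (δ : ℤ) := by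
  unfold deltaA
  rw [Finset.sum_singleton, compl0, Finset.sum_singleton]
  simp [vineK]

lemma vine_delta1 (δ : ℕ) : deltaA (vineK δ) {1} = (δ : ℤ) := by
  unfold deltaA
  rw [Finset.sum_singleton, compl1, Finset.sum_singleton]
  simp [vineK]

lemma vine_not_general (g d : ℤ) (hg : 2 ≤ g) (g1 g2 δ : ℕ) (hδ2 : 2 ≤ δ)
    (hgenus : (g1 : ℤ) + g2 + δ - 1 = g) (d0 : ℤ)
    (hkey : (2 * g - 2) * (2 * d0 + δ) = 2 * d * (2 * (g1 : ℤ) - 2 + δ)) :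
    ¬ IsDGeneral (vineK δ) (vineW g1 g2) d := by
  intro hGen
  have hnq : ((2 * g - 2 : ℤ) : ℚ) ≠ 0 := by
    have : (0 : ℤ) < 2 * g - 2 := by omega
    exact_mod_cast this.ne'
  have hkeyQ : ((2 * g - 2 : ℤ) : ℚ) * (2 * d0 + δ) = 2 * d * (2 * (g1 : ℚ) - 2 + δ) := by
    exact_mod_cast congrArg (fun z : ℤ => (z : ℚ)) hkey
  set dd : Fin 2 → ℤ := fun i => if i = 0 then d0 else d - d0 with hdd
  have hgenus' : genus (vineK δ) (vineW g1 g2) = g := by rw [vine_genus]; exact hgenus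
  have hdeg0 : degA dd {0} = d0 := by simp [degA, hdd]
  have hdeg1 : degA dd {1} = d - d0 := by simp [degA, hdd]
  have hmA0 : mA (vineK δ) (vineW g1 g2) d {0} = (d0 : ℚ) := by
    unfold mA
    rw [hgenus', vine_wA0, vine_delta0, sub_eq_iff_eq_add, div_eq_iff hnq]
    push_cast
    push_cast at hkeyQ
    linear_combination (-(1 : ℚ)/2) * hkeyQ
  have hgenusQ : (g1 : ℚ) + g2 + δ - 1 = g := by exact_mod_cast hgenus
  have hmA1 : mA (vineK δ) (vineW g1 g2) d {1} = (d : ℚ) - d0 - δ := by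
    unfold mA
    rw [hgenus', vine_wA1, vine_delta1, sub_eq_iff_eq_add, div_eq_iff hnq]
    push_cast
    push_cast at hkeyQ
    linear_combination ((1 : ℚ)/2) * hkeyQ + 2 * (d : ℚ) * hgenusQ
  have hwuniv : wA (vineK δ) (vineW g1 g2) Finset.univ = 2 * g - 2 := by
    rw [wA_univ_eq _ _ (vineK_symm δ), hgenus']
  have hdeltauniv : deltaA (vineK δ) Finset.univ = 0 := by
    unfold deltaA
    simp
  have hmAuniv : mA (vineK δ) (vineW g1 g2) d Finset.univ = (d : ℚ) := by
    unfold mA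
    rw [hgenus', hwuniv, hdeltauniv]
    push_cast
    rw [mul_div_assoc, div_self (by have h := hnq; push_cast at h; exact h)]
    ring
  have hdeguniv : degA dd Finset.univ = d := by
    unfold degA
    rw [Fin.sum_univ_two]
    simp [hdd]
  have hbal : IsBalanced (vineK δ) (vineW g1 g2) d dd := by
    constructor
    · simpa [degA] using hdeguniv
    · intro A
      have hA4 : A = ∅ ∨ A = {0} ∨ A = {1} ∨ A = Finset.univ := by
        fin_cases A <;> simp <;> decide
      rcases hA4 with rfl | rfl | rfl | rfl
      · simp [mA, wA, deltaA, degA]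
      · rw [hmA0, hdeg0]
      · rw [hmA1, hdeg1]
        have : (0 : ℚ) ≤ (δ : ℚ) := by positivity
        push_cast
        linarith
      · rw [hmAuniv, hdeguniv]
  have hstrict := (hGen dd hbal).2 {0} (by decide) (by decide)
  rw [hmA0, hdeg0] at hstrict
  exact lt_irrefl _ hstrict
/-- `gcd(d−g+1, 2g−2) = 1` iff every stable weighted graph of
genus `g` is `d`-general. -/
theorem stmt16 (g d : ℤ) (hg : 2 ≤ g) :
    Int.gcd (d - g + 1) (2 * g - 2) = 1 ↔
      ∀ (V : Type) [Fintype V] [DecidableEq V] (k : V → V → ℕ) (w : V → ℕ),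
        (∀ u v, k u v = k v u) → IsStable k w → genus k w = g →
          IsDGeneral k w d := by
  constructor
  · intro hgcd W _ _ k w hk hst hgen
    exact forward_general g d hg hgcd k w hk hst hgen
  · intro H
    by_contra hgcd
    set m : ℤ := (Int.gcd (d - g + 1) (2 * g - 2) : ℤ) with hm
    have hm2 : 2 ≤ m := by
      have h0 : Int.gcd (d - g + 1) (2 * g - 2) ≠ 0 := by
        intro h
        have := (Int.gcd_eq_zero_iff.mp h).2
        omega
      have h1 : Int.gcd (d - g + 1) (2 * g - 2) ≠ 1 := hgcd
      omega
    obtain ⟨e', he'⟩ : m ∣ (d - g + 1) := by rw [hm]; exact Int.gcd_dvd_left _ _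
    obtain ⟨s, hs⟩ : m ∣ (2 * g - 2) := by rw [hm]; exact Int.gcd_dvd_right _ _
    have hspos : 0 < s := by
      by_contra hcon
      push_neg at hcon
      have h1 : m * s ≤ 0 := mul_nonpos_iff.mpr (Or.inl ⟨by linarith, hcon⟩)
      linarith
    have h2s : 2 * s ≤ 2 * g - 2 := by
      have h1 := mul_le_mul_of_nonneg_right hm2 (le_of_lt hspos)
      linarith
    rcases Int.even_or_odd s with ⟨r, hr⟩ | ⟨r, hr⟩
    · -- s even, use δ = 2
      have hr1 : 1 ≤ r := by omega
      have hr2 : r ≤ g - 2 := by omega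
      have hg1 : ((r.toNat : ℤ)) = r := Int.toNat_of_nonneg (by omega)
      have hg2 : (((g - 1 - r).toNat : ℤ)) = g - 1 - r := Int.toNat_of_nonneg (by omega)
      have hgenus : ((r.toNat : ℤ)) + ((g - 1 - r).toNat : ℤ) + ((2 : ℕ) : ℤ) - 1 = g := by
        rw [hg1, hg2]; push_cast; ring
      have hst3 : (r.toNat = 0 ∨ (g - 1 - r).toNat = 0) → 3 ≤ 2 := by
        rintro (h | h) <;> omega
      have hkey : (2 * g - 2) * (2 * (e' + r - 1) + ((2 : ℕ) : ℤ))
          = 2 * d * (2 * ((r.toNat : ℤ)) - 2 + ((2 : ℕ) : ℤ)) := by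
        rw [hg1]; push_cast
        linear_combination 2 * e' * hs - 4 * r * he' + 2 * m * e' * hr
      exact vine_not_general g d hg r.toNat (g - 1 - r).toNat 2 (le_refl 2) hgenus
        (e' + r - 1) hkey
        (H (Fin 2) (vineK 2) (vineW r.toNat (g - 1 - r).toNat) (vineK_symm 2)
          (vine_stable _ _ 2 (le_refl 2) hst3)
          (by rw [vine_genus]; exact_mod_cast hgenus))
    · -- s odd, use δ = 3
      have hr0 : 0 ≤ r := by omega
      have hr2 : r ≤ g - 2 := by omega
      have hg1 : ((r.toNat : ℤ)) = r := Int.toNat_of_nonneg (by omega)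
      have hg2 : (((g - 2 - r).toNat : ℤ)) = g - 2 - r := Int.toNat_of_nonneg (by omega)
      have hgenus : ((r.toNat : ℤ)) + ((g - 2 - r).toNat : ℤ) + ((3 : ℕ) : ℤ) - 1 = g := by
        rw [hg1, hg2]; push_cast; ring
      have hst3 : (r.toNat = 0 ∨ (g - 2 - r).toNat = 0) → 3 ≤ 3 := fun _ => le_refl 3
      have hkey : (2 * g - 2) * (2 * (e' + r - 1) + ((3 : ℕ) : ℤ))
          = 2 * d * (2 * ((r.toNat : ℤ)) - 2 + ((3 : ℕ) : ℤ)) := by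
        rw [hg1]; push_cast
        linear_combination 2 * e' * hs - 2 * (2 * r + 1) * he' + 2 * m * e' * hr
      exact vine_not_general g d hg r.toNat (g - 2 - r).toNat 3 (by norm_num) hgenus
        (e' + r - 1) hkey
        (H (Fin 2) (vineK 3) (vineW r.toNat (g - 2 - r).toNat) (vineK_symm 3)
          (vine_stable _ _ 3 (by norm_num) hst3)
          (by rw [vine_genus]; exact_mod_cast hgenus))
end
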